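/- arXiv:1409.0488 — 2 statements merged into one kernel-verified Lean document; each statement's English description precedes it below -/
import Mathlib

section
/- Every positive integer m can be written in exactly one way as m = Σ_{i∈S} a(i) where S is a Kentucky-2 legal finite set of positive integers; that is, there exists a unique Kentucky-2 legal finite set S ⊆ ℕ≥1 with Σ_{i∈S} a(i) = m. -/
/-- The Kentucky-2 sequence: `a 1 = 1`, `a 2 = 2`, `a 3 = 3`, `a 4 = 4`, and
`a (n+4) = a (n+2) + 2 * a n` for all `n ≥ 1`. -/
def kent : ℕ → ℕ
  | 0 => 0
  | 1 => 1
  | 2 => 2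
  | 3 => 3
  | 4 => 4
  | n + 5 => kent (n + 3) + 2 * kent (n + 1)

/-- A finite set `S` of positive integers is Kentucky-2 legal if for all distinct
`i, j ∈ S` we have `|⌈i/2⌉ - ⌈j/2⌉| ≥ 2`, i.e. no two elements lie in the same bin
`b k = {2k-1, 2k}` or in adjacent bins. -/
def KLegal (S : Finset ℕ) : Prop :=
  (∀ i ∈ S, 1 ≤ i) ∧
  ∀ i ∈ S, ∀ j ∈ S, i ≠ j → 2 ≤ |(((i + 1) / 2 : ℕ) : ℤ) - (((j + 1) / 2 : ℕ) : ℤ)|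

lemma kent_rec (n : ℕ) : kent (n+5) = kent (n+3) + 2 * kent (n+1) := rfl

lemma kentSM : StrictMono kent := by
  apply strictMono_nat_of_lt_succ
  intro n
  induction n using Nat.strong_induction_on with
  | _ n ih =>
    match n with
    | 0 => decide
    | 1 => decide
    | 2 => decide
    | 3 => decide
    | 4 => decide
    | (m+5) =>
      have h1 : kent (m+3) < kent (m+4) := ih (m+3) (by omega)
      have h2 : kent (m+1) < kent (m+2) := ih (m+1) (by omega)
      have e1 : kent (m+5) = kent (m+3) + 2 * kent (m+1) := rfl
      have e2 : kent (m+6) = kent (m+4) + 2 * kent (m+2) := rfl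
      show kent (m+5) < kent (m+6)
      omega

lemma kentC : ∀ k, kent (2*k+1) + kent (2*k+3) = 2 * kent (2*k+2) := by
  intro k
  induction k using Nat.strong_induction_on with
  | _ k ih =>
    match k with
    | 0 => decide
    | 1 => decide
    | (j+2) =>
      have r1 : kent (2*j+5) = kent (2*j+3) + 2 * kent (2*j+1) := kent_rec (2*j)
      have r2 : kent (2*j+6) = kent (2*j+4) + 2 * kent (2*j+2) := kent_rec (2*j+1)
      have r3 : kent (2*j+7) = kent (2*j+5) + 2 * kent (2*j+3) := kent_rec (2*j+2)
      have e0 := ih j (by omega)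
      have e1 : kent (2*j+3) + kent (2*j+5) = 2 * kent (2*j+4) := by
        rw [show 2*j+3 = 2*(j+1)+1 by ring, show 2*j+5 = 2*(j+1)+3 by ring,
          show 2*j+4 = 2*(j+1)+2 by ring]
        exact ih (j+1) (by omega)
      show kent (2*j+5) + kent (2*j+7) = 2 * kent (2*j+6)
      omega

lemma kentA : ∀ k, kent (2*k+4) = kent (2*k+3) + kent (2*k+1) := by
  intro k
  induction k with
  | zero => decide
  | succ j ih =>
    have r1 : kent (2*j+5) = kent (2*j+3) + 2 * kent (2*j+1) := kent_rec (2*j)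
    have r2 : kent (2*j+6) = kent (2*j+4) + 2 * kent (2*j+2) := kent_rec (2*j+1)
    have c := kentC j
    show kent (2*j+6) = kent (2*j+5) + kent (2*j+3)
    omega

lemma kentB (k : ℕ) : kent (2*k+5) = kent (2*k+4) + kent (2*k+1) := by
  have a := kentA k
  have c : kent (2*k+3) + kent (2*k+5) = 2 * kent (2*k+4) := by
    rw [show 2*k+3 = 2*(k+1)+1 by ring, show 2*k+5 = 2*(k+1)+3 by ring,
      show 2*k+4 = 2*(k+1)+2 by ring]
    exact kentC (k+1)
  omega

lemma kent_succ (n : ℕ) (hn : 3 ≤ n) :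
    kent (n+1) = kent n + kent (2*((n+1)/2) - 3) := by
  rcases Nat.even_or_odd n with ⟨k, hk⟩ | ⟨k, hk⟩
  · obtain ⟨j, rfl⟩ : ∃ j, k = j + 2 := ⟨k - 2, by omega⟩
    subst hk
    have hB := kentB j
    have e1 : (j+2) + (j+2) + 1 = 2*j+5 := by ring
    have e2 : (j+2) + (j+2) = 2*j+4 := by ring
    rw [e1, e2, show 2*((2*j+5)/2) - 3 = 2*j+1 by omega]
    omega
  · obtain ⟨j, rfl⟩ : ∃ j, k = j + 1 := ⟨k - 1, by omega⟩
    subst hk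
    have hA := kentA j
    have e1 : 2*(j+1) + 1 + 1 = 2*j+4 := by ring
    have e2 : 2*(j+1) + 1 = 2*j+3 := by ring
    rw [e1, e2, show 2*((2*j+4)/2) - 3 = 2*j+1 by omega]
    omega

lemma abs2 (a b : ℕ) : 2 ≤ |(a:ℤ) - (b:ℤ)| ↔ a + 2 ≤ b ∨ b + 2 ≤ a := by
  rw [le_abs]; omega

lemma KLegal_subset {S T : Finset ℕ} (h : S ⊆ T) (hT : KLegal T) : KLegal S :=
  ⟨fun i hi => hT.1 i (h hi), fun i hi j hj hij => hT.2 i (h hi) j (h hj) hij⟩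

lemma kent_pos {n : ℕ} (hn : 1 ≤ n) : 1 ≤ kent n := kentSM (show 0 < n from hn)

/-- maximal sum bound: legal sets with elements ≤ 2j have sum < kent (2j+1). -/
lemma sum_lt : ∀ j, ∀ S : Finset ℕ, KLegal S → (∀ i ∈ S, i ≤ 2*j) →
    ∑ i ∈ S, kent i < kent (2*j+1) := by
  intro j
  induction j using Nat.strong_induction_on with
  | _ j ih =>
    intro S hS hb
    rcases S.eq_empty_or_nonempty with rfl | hne
    · simpa [Nat.lt_iff_add_one_le] using kent_pos (show 1 ≤ 2*j+1 by omega)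
    · set t := S.max' hne with ht
      have htS : t ∈ S := S.max'_mem hne
      have ht1 : 1 ≤ t := hS.1 t htS
      have htj : t ≤ 2*j := hb t htS
      have hmax : ∀ i ∈ S, i ≤ t := fun i hi => S.le_max' i hi
      set b := (t+1)/2 with hbdef
      have hS' : KLegal (S.erase t) := KLegal_subset (S.erase_subset t) hS
      have hsmall : ∀ i ∈ S.erase t, i ≤ 2*b - 4 ∧ 2 ≤ b := by
        intro i hi
        have hiS := S.mem_of_mem_erase hi
        have hit : i ≠ t := S.ne_of_mem_erase hi
        have := (abs2 ((i+1)/2) ((t+1)/2)).1 (hS.2 i hiS t htS hit)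
        have hile := hmax i hiS
        omega
      have hsum : kent t + ∑ i ∈ S.erase t, kent i = ∑ i ∈ S, kent i :=
        Finset.add_sum_erase S kent htS
      by_cases hb2 : 2 ≤ b
      · have herase : ∀ i ∈ S.erase t, i ≤ 2*(b-2) := by
          intro i hi; have := hsmall i hi; omega
        have hrest := ih (b-2) (by omega) (S.erase t) hS' herase
        have ht3 : 3 ≤ t := by omega
        have hsucc := kent_succ t ht3
        have hidx : 2*((t+1)/2) - 3 = 2*(b-2)+1 := by omega
        rw [hidx] at hsucc
        have hmono : kent (t+1) ≤ kent (2*j+1) := kentSM.monotone (by omega)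
        omega
      · have herase : S.erase t = ∅ := by
          rw [Finset.eq_empty_iff_forall_notMem]
          intro i hi; have := hsmall i hi; omega
        rw [herase] at hsum
        simp only [Finset.sum_empty, add_zero] at hsum
        have : kent t < kent (2*j+1) := kentSM (by omega)
        omega

lemma bracket {S : Finset ℕ} (hS : KLegal S) (hne : S.Nonempty) :
    kent (S.max' hne) ≤ ∑ i ∈ S, kent i ∧ ∑ i ∈ S, kent i < kent (S.max' hne + 1) := by
  set t := S.max' hne with ht
  have htS : t ∈ S := S.max'_mem hne
  have ht1 : 1 ≤ t := hS.1 t htS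
  have hmax : ∀ i ∈ S, i ≤ t := fun i hi => S.le_max' i hi
  set b := (t+1)/2 with hbdef
  have hS' : KLegal (S.erase t) := KLegal_subset (S.erase_subset t) hS
  have hsmall : ∀ i ∈ S.erase t, i ≤ 2*b - 4 ∧ 2 ≤ b := by
    intro i hi
    have hiS := S.mem_of_mem_erase hi
    have hit : i ≠ t := S.ne_of_mem_erase hi
    have := (abs2 ((i+1)/2) ((t+1)/2)).1 (hS.2 i hiS t htS hit)
    have hile := hmax i hiS
    omega
  have hsum : kent t + ∑ i ∈ S.erase t, kent i = ∑ i ∈ S, kent i :=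
    Finset.add_sum_erase S kent htS
  constructor
  · have : ∀ i ∈ S, 0 ≤ kent i := fun i _ => Nat.zero_le _
    exact Finset.single_le_sum this htS
  · by_cases hb2 : 2 ≤ b
    · have herase : ∀ i ∈ S.erase t, i ≤ 2*(b-2) := by
        intro i hi; have := hsmall i hi; omega
      have hrest := sum_lt (b-2) (S.erase t) hS' herase
      have hsucc := kent_succ t (by omega)
      have hidx : 2*((t+1)/2) - 3 = 2*(b-2)+1 := by omega
      rw [hidx] at hsucc
      omega
    · have herase : S.erase t = ∅ := by
        rw [Finset.eq_empty_iff_forall_notMem]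
        intro i hi; have := hsmall i hi; omega
      rw [herase] at hsum
      simp only [Finset.sum_empty, add_zero] at hsum
      have : kent t < kent (t+1) := kentSM (by omega)
      omega

lemma exists_top (m : ℕ) (hm : 1 ≤ m) : ∃ t, 1 ≤ t ∧ kent t ≤ m ∧ m < kent (t+1) := by
  classical
  have hP1 : kent 1 ≤ m := by simpa [kent] using hm
  refine ⟨Nat.findGreatest (fun t => kent t ≤ m) m,
    Nat.le_findGreatest hm hP1, Nat.findGreatest_spec (P := fun t => kent t ≤ m) hm hP1, ?_⟩
  rcases Nat.lt_or_ge (Nat.findGreatest (fun t => kent t ≤ m) m) m with htm | htm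
  · have h2 : ¬ (kent (Nat.findGreatest (fun t => kent t ≤ m) m + 1) ≤ m) :=
      Nat.findGreatest_is_greatest (P := fun t => kent t ≤ m) (n := m) (by omega) (by omega)
    omega
  · have hle : Nat.findGreatest (fun t => kent t ≤ m) m ≤ m := Nat.findGreatest_le m
    have he : Nat.findGreatest (fun t => kent t ≤ m) m = m := le_antisymm hle htm
    have h2 : m + 1 ≤ kent (m+1) := kentSM.le_apply
    rw [he]
    omega

lemma top_eq {m t t' : ℕ} (h1 : kent t ≤ m) (h2 : m < kent (t+1))
    (h3 : kent t' ≤ m) (h4 : m < kent (t'+1)) : t = t' := by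
  rcases lt_trichotomy t t' with h | h | h
  · have : kent (t+1) ≤ kent t' := kentSM.monotone (by omega)
    omega
  · exact h
  · have : kent (t'+1) ≤ kent t := kentSM.monotone (by omega)
    omega

lemma sum_zero_empty {S : Finset ℕ} (hS : KLegal S) (h : ∑ i ∈ S, kent i = 0) :
    S = ∅ := by
  rcases S.eq_empty_or_nonempty with rfl | ⟨x, hx⟩
  · rfl
  · have h1 := Finset.single_le_sum (f := kent) (fun i _ => Nat.zero_le _) hx
    have := kent_pos (hS.1 x hx)
    omega


/-- Every positive integer `m` can be written in exactly one way as `m = Σ_{i∈S} a i`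
with `S` a Kentucky-2 legal finite set of positive integers. -/
theorem kentucky_unique_decomposition (m : ℕ) (hm : 1 ≤ m) :
    ∃! S : Finset ℕ, KLegal S ∧ ∑ i ∈ S, kent i = m := by
  induction m using Nat.strong_induction_on with
  | _ m ih =>
  obtain ⟨t, ht1, htle, htlt⟩ := exists_top m hm
  have htpos : 1 ≤ kent t := kent_pos ht1
  have top_unique : ∀ S' : Finset ℕ, KLegal S' → ∑ i ∈ S', kent i = m →
      t ∈ S' ∧ ∑ i ∈ S'.erase t, kent i = m - kent t := by
    intro S' hS' hsum
    have hne : S'.Nonempty := by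
      rcases S'.eq_empty_or_nonempty with rfl | h
      · simp at hsum; omega
      · exact h
    obtain ⟨hlow, hhigh⟩ := bracket hS' hne
    rw [hsum] at hlow hhigh
    have hteq : S'.max' hne = t := top_eq hlow hhigh htle htlt
    have htmem : t ∈ S' := hteq ▸ S'.max'_mem hne
    have := Finset.add_sum_erase S' kent htmem
    exact ⟨htmem, by omega⟩
  by_cases hr0 : m - kent t = 0
  · refine ⟨{t}, ⟨⟨?_, ?_⟩, ?_⟩, ?_⟩
    · intro i hi; simp at hi; omega
    · intro i hi j hj hij; simp at hi hj; omega
    · simp; omega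
    · rintro S' ⟨hS', hsum⟩
      obtain ⟨htmem, herased⟩ := top_unique S' hS' hsum
      have hempty : S'.erase t = ∅ :=
        sum_zero_empty (KLegal_subset (S'.erase_subset t) hS') (by omega)
      have hie := Finset.insert_erase htmem
      rw [hempty] at hie
      simp at hie
      rw [← hie]
  · have ht3 : 3 ≤ t := by
      by_contra h
      interval_cases t <;> simp_all [kent] <;> omega
    have hsucc : kent (t+1) = kent t + kent (2*((t+1)/2) - 3) := kent_succ t ht3
    have hrlt : m - kent t < kent (2*((t+1)/2) - 3) := by omega
    have hd1 : m - kent t < m := by omega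
    have hd2 : 1 ≤ m - kent t := by omega
    obtain ⟨T, ⟨hT, hTsum⟩, hTuniq⟩ := ih (m - kent t) hd1 hd2
    have hTsmall : ∀ i ∈ T, i ≤ 2*((t+1)/2) - 4 := by
      intro i hi
      have h1 : kent i ≤ m - kent t :=
        hTsum ▸ Finset.single_le_sum (f := kent) (fun i _ => Nat.zero_le _) hi
      have h2 : kent i < kent (2*((t+1)/2) - 3) := by omega
      have h3 := kentSM.lt_iff_lt.mp h2
      omega
    have htT : t ∉ T := fun h => by have := hTsmall t h; omega
    refine ⟨insert t T, ⟨⟨?_, ?_⟩, ?_⟩, ?_⟩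
    · intro i hi
      rcases Finset.mem_insert.mp hi with rfl | hi
      · omega
      · exact hT.1 i hi
    · intro i hi j hj hij
      rcases Finset.mem_insert.mp hi with rfl | hi' <;>
        rcases Finset.mem_insert.mp hj with rfl | hj'
      · omega
      · have := hTsmall j hj'
        rw [abs2]; omega
      · have := hTsmall i hi'
        rw [abs2]; omega
      · exact hT.2 i hi' j hj' hij
    · rw [Finset.sum_insert htT, hTsum]; omega
    · rintro S' ⟨hS', hsum⟩
      obtain ⟨htmem, herased⟩ := top_unique S' hS' hsum
      have heq : S'.erase t = T :=
        hTuniq (S'.erase t) ⟨KLegal_subset (S'.erase_subset t) hS', herased⟩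
      rw [← Finset.insert_erase htmem, heq]
end

section
/- For all k ≥ 1 and all n ≥ 2k − 1, p(n,k) = 2^k · C(n − k + 1, k), where C denotes the binomial coefficient. -/
open scoped Classical

/-- `p n k` is the number of Kentucky-2 legal subsets of `{1,…,2n}` of cardinality `k`. -/
noncomputable def p (n k : ℕ) : ℕ :=
  ((Finset.Icc 1 (2 * n)).powerset.filter (fun S => KLegal S ∧ S.card = k)).card

lemma abs_ge_two {a b : ℕ} (h : a + 2 ≤ b ∨ b + 2 ≤ a) : 2 ≤ |(a : ℤ) - (b : ℤ)| := by
  rw [le_abs]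
  rcases h with h | h
  · right; omega
  · left; omega

lemma klegal_gap {S : Finset ℕ} (h : KLegal S) {i j : ℕ} (hi : i ∈ S) (hj : j ∈ S)
    (hij : i ≠ j) : (i + 1) / 2 + 2 ≤ (j + 1) / 2 ∨ (j + 1) / 2 + 2 ≤ (i + 1) / 2 := by
  have h2 := h.2 i hi j hj hij
  rcases le_abs.mp h2 with h' | h' <;> omega

lemma klegal_subset {S T : Finset ℕ} (hT : KLegal T) (h : S ⊆ T) : KLegal S :=
  ⟨fun i hi => hT.1 i (h hi), fun i hi j hj hij => hT.2 i (h hi) j (h hj) hij⟩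

lemma klegal_insert {n : ℕ} (hn : 2 ≤ n) {t : ℕ} (ht : t = 2 * n - 1 ∨ t = 2 * n)
    {S : Finset ℕ} (hS : KLegal S) (hsub : S ⊆ Finset.Icc 1 (2 * (n - 2))) :
    KLegal (insert t S) := by
  constructor
  · intro i hi
    rcases Finset.mem_insert.mp hi with rfl | hi
    · omega
    · exact hS.1 i hi
  · intro i hi j hj hij
    rcases Finset.mem_insert.mp hi with hit | hi' <;>
      rcases Finset.mem_insert.mp hj with hjt | hj'
    · exact absurd (hit.trans hjt.symm) hij
    · have hj2 := Finset.mem_Icc.mp (hsub hj')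
      exact abs_ge_two (by omega)
    · have hi2 := Finset.mem_Icc.mp (hsub hi')
      exact abs_ge_two (by omega)
    · exact hS.2 i hi' j hj' hij

lemma mem_bound {n : ℕ} (hn : 2 ≤ n) {t : ℕ} (ht : t = 2 * n - 1 ∨ t = 2 * n)
    {S : Finset ℕ} (hS : KLegal S) (hsub : S ⊆ Finset.Icc 1 (2 * n)) (htS : t ∈ S)
    {j : ℕ} (hj : j ∈ S) (hjt : j ≠ t) : j ∈ Finset.Icc 1 (2 * (n - 2)) := by
  have h1 := Finset.mem_Icc.mp (hsub hj)
  have h2 := klegal_gap hS hj htS hjt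
  rw [Finset.mem_Icc]
  omega

lemma card_top (n k : ℕ) (hn : 2 ≤ n) (hk : 1 ≤ k) {t : ℕ}
    (ht : t = 2 * n - 1 ∨ t = 2 * n) :
    ((Finset.Icc 1 (2 * n)).powerset.filter
        (fun S => (KLegal S ∧ S.card = k) ∧ t ∈ S)).card =
      ((Finset.Icc 1 (2 * (n - 2))).powerset.filter
        (fun S => KLegal S ∧ S.card = k - 1)).card := by
  have htnotin : ∀ S' : Finset ℕ, S' ⊆ Finset.Icc 1 (2 * (n - 2)) → t ∉ S' := by
    intro S' hsub h
    have := Finset.mem_Icc.mp (hsub h); omega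
  refine Finset.card_nbij' (fun S => S.erase t) (fun S' => insert t S') ?_ ?_ ?_ ?_
  · intro S hS
    rw [Finset.mem_coe, Finset.mem_filter, Finset.mem_powerset] at hS
    rw [Finset.mem_coe, Finset.mem_filter, Finset.mem_powerset]
    obtain ⟨hsub, ⟨hleg, hcard⟩, htS⟩ := hS
    refine ⟨?_, klegal_subset hleg (Finset.erase_subset _ _), ?_⟩
    · intro j hj
      have hj' := Finset.mem_erase.mp hj
      exact mem_bound hn ht hleg hsub htS hj'.2 hj'.1
    · rw [Finset.card_erase_of_mem htS, hcard]
  · intro S' hS'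
    rw [Finset.mem_coe, Finset.mem_filter, Finset.mem_powerset] at hS'
    rw [Finset.mem_coe, Finset.mem_filter, Finset.mem_powerset]
    obtain ⟨hsub, hleg, hcard⟩ := hS'
    refine ⟨?_, ⟨klegal_insert hn ht hleg hsub, ?_⟩, Finset.mem_insert_self _ _⟩
    · intro j hj
      rcases Finset.mem_insert.mp hj with rfl | hj
      · rw [Finset.mem_Icc]; omega
      · have := Finset.mem_Icc.mp (hsub hj)
        rw [Finset.mem_Icc]; omega
    · rw [Finset.card_insert_of_notMem (htnotin S' hsub), hcard]
      omega
  · intro S hS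
    rw [Finset.mem_coe, Finset.mem_filter] at hS
    exact Finset.insert_erase hS.2.2
  · intro S' hS'
    rw [Finset.mem_coe, Finset.mem_filter, Finset.mem_powerset] at hS'
    exact Finset.erase_insert (htnotin S' hS'.1)

lemma p_rec (n k : ℕ) (hn : 2 ≤ n) (hk : 1 ≤ k) :
    p n k = p (n - 1) k + 2 * p (n - 2) (k - 1) := by
  classical
  set P : Finset ℕ → Prop := fun S => KLegal S ∧ S.card = k with hP
  set A : Finset (Finset ℕ) := (Finset.Icc 1 (2 * n)).powerset.filter P with hA
  -- split on 2*n ∈ S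
  have h1 : (A.filter (fun S => 2 * n ∈ S)).card
      + (A.filter (fun S => ¬ (2 * n ∈ S))).card = A.card :=
    Finset.card_filter_add_card_filter_not _
  have h2 : ((A.filter (fun S => ¬ (2 * n ∈ S))).filter (fun S => 2 * n - 1 ∈ S)).card
      + ((A.filter (fun S => ¬ (2 * n ∈ S))).filter (fun S => ¬ (2 * n - 1 ∈ S))).card
      = (A.filter (fun S => ¬ (2 * n ∈ S))).card :=
    Finset.card_filter_add_card_filter_not _
  -- piece 1 : contains 2*n
  have e1 : (A.filter (fun S => 2 * n ∈ S)).card = p (n - 2) (k - 1) := by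
    rw [hA, Finset.filter_filter]
    have := card_top n k hn hk (t := 2 * n) (Or.inr rfl)
    rw [this]
    rfl
  -- piece 2 : contains 2*n-1 (and not 2*n)
  have e2 : ((A.filter (fun S => ¬ (2 * n ∈ S))).filter (fun S => 2 * n - 1 ∈ S)).card
      = p (n - 2) (k - 1) := by
    rw [hA, Finset.filter_filter, Finset.filter_filter]
    have heq : (Finset.Icc 1 (2 * n)).powerset.filter
        (fun S => P S ∧ ¬ (2 * n ∈ S) ∧ 2 * n - 1 ∈ S)
        = (Finset.Icc 1 (2 * n)).powerset.filter (fun S => P S ∧ 2 * n - 1 ∈ S) := by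
      apply Finset.filter_congr
      intro S hS
      constructor
      · rintro ⟨hp, -, h⟩; exact ⟨hp, h⟩
      · rintro ⟨hp, h⟩
        refine ⟨hp, ?_, h⟩
        intro h2n
        have := klegal_gap hp.1 h h2n (by omega)
        omega
    rw [heq]
    have := card_top n k hn hk (t := 2 * n - 1) (Or.inl rfl)
    rw [this]
    rfl
  -- piece 3 : contains neither
  have e3 : ((A.filter (fun S => ¬ (2 * n ∈ S))).filter (fun S => ¬ (2 * n - 1 ∈ S))).card
      = p (n - 1) k := by
    rw [hA, Finset.filter_filter, Finset.filter_filter]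
    have heq : (Finset.Icc 1 (2 * n)).powerset.filter
        (fun S => P S ∧ ¬ (2 * n ∈ S) ∧ ¬ (2 * n - 1 ∈ S))
        = (Finset.Icc 1 (2 * (n - 1))).powerset.filter P := by
      ext S
      simp only [Finset.mem_filter, Finset.mem_powerset]
      constructor
      · rintro ⟨hsub, hp, h1', h2'⟩
        refine ⟨?_, hp⟩
        intro x hx
        have hx' := Finset.mem_Icc.mp (hsub hx)
        have hx1 : x ≠ 2 * n - 1 := by rintro rfl; exact h2' hx
        have hx2 : x ≠ 2 * n := by rintro rfl; exact h1' hx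
        rw [Finset.mem_Icc]
        omega
      · rintro ⟨hsub, hp⟩
        have hb : ∀ x ∈ S, x ≤ 2 * (n - 1) := fun x hx => (Finset.mem_Icc.mp (hsub hx)).2
        refine ⟨?_, hp, ?_, ?_⟩
        · intro x hx
          have := Finset.mem_Icc.mp (hsub hx)
          rw [Finset.mem_Icc]; omega
        · intro h; have := hb _ h; omega
        · intro h; have := hb _ h; omega
    rw [heq]
    rfl
  have : p n k = A.card := rfl
  omega

lemma p_zero_right (n : ℕ) : p n 0 = 1 := by
  classical
  unfold p
  rw [show ((Finset.Icc 1 (2 * n)).powerset.filter (fun S => KLegal S ∧ S.card = 0))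
      = {∅} from ?_]
  · rfl
  · ext S
    simp only [Finset.mem_filter, Finset.mem_powerset, Finset.mem_singleton,
      Finset.card_eq_zero]
    constructor
    · rintro ⟨-, -, h⟩; exact h
    · rintro rfl
      refine ⟨Finset.empty_subset _, ⟨?_, ?_⟩, rfl⟩
      · intro i hi; simp at hi
      · intro i hi; simp at hi

lemma p_zero_left (k : ℕ) (hk : 1 ≤ k) : p 0 k = 0 := by
  classical
  unfold p
  rw [Finset.card_eq_zero, Finset.filter_eq_empty_iff]
  intro S hS
  rw [Finset.mem_powerset] at hS
  rintro ⟨-, hcard⟩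
  have : S = ∅ := Finset.subset_empty.mp (by simpa using hS)
  rw [this] at hcard
  simp at hcard
  omega

lemma p_one_one : p 1 1 = 2 := by
  classical
  unfold p
  rw [show ((Finset.Icc 1 (2 * 1)).powerset.filter (fun S => KLegal S ∧ S.card = 1))
      = {{1}, {2}} from ?_]
  · rfl
  · ext S
    simp only [Finset.mem_filter, Finset.mem_powerset, Finset.mem_insert,
      Finset.mem_singleton]
    constructor
    · rintro ⟨hsub, -, hcard⟩
      obtain ⟨a, rfl⟩ := Finset.card_eq_one.mp hcard
      have : a ∈ Finset.Icc 1 (2 * 1) := hsub (Finset.mem_singleton_self a)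
      rw [Finset.mem_Icc] at this
      obtain ⟨ha1, ha2⟩ := this
      have ha2' : a ≤ 2 := by omega
      interval_cases a
      · left; rfl
      · right; rfl
    · rintro (rfl | rfl)
      · refine ⟨?_, ⟨?_, ?_⟩, rfl⟩
        · intro x hx; rw [Finset.mem_singleton] at hx; subst hx; decide
        · intro i hi; rw [Finset.mem_singleton] at hi; omega
        · intro i hi j hj hij
          rw [Finset.mem_singleton] at hi hj; omega
      · refine ⟨?_, ⟨?_, ?_⟩, rfl⟩
        · intro x hx; rw [Finset.mem_singleton] at hx; subst hx; decide
        · intro i hi; rw [Finset.mem_singleton] at hi; omega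
        · intro i hi j hj hij
          rw [Finset.mem_singleton] at hi hj; omega

lemma p_one (k : ℕ) (hk : 2 ≤ k) : p 1 k = 0 := by
  classical
  unfold p
  rw [Finset.card_eq_zero, Finset.filter_eq_empty_iff]
  intro S hS
  rw [Finset.mem_powerset] at hS
  rintro ⟨hleg, hcard⟩
  have hle : S.card ≤ 2 := by
    calc S.card ≤ (Finset.Icc 1 (2 * 1)).card := Finset.card_le_card hS
    _ = 2 := by simp
  have hk2 : k = 2 := by omega
  subst hk2
  have hSeq : S = Finset.Icc 1 2 := Finset.eq_of_subset_of_card_le hS (by simp [hcard])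
  have h1 : (1 : ℕ) ∈ S := by rw [hSeq]; decide
  have h2 : (2 : ℕ) ∈ S := by rw [hSeq]; decide
  have := klegal_gap hleg h1 h2 (by omega)
  omega

lemma p_eq_zero (n : ℕ) : ∀ k, 1 ≤ k → n + 1 ≤ 2 * k - 1 → p n k = 0 := by
  induction n using Nat.strong_induction_on with
  | _ n ih =>
    intro k hk hn
    match n, hn with
    | 0, _ => exact p_zero_left k hk
    | 1, hn => exact p_one k (by omega)
    | (m + 2), hn =>
      have hk2 : 2 ≤ k := by omega
      rw [p_rec (m + 2) k (by omega) hk]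
      have z1 : p (m + 2 - 1) k = 0 := ih (m + 1) (by omega) k hk (by omega)
      have z2 : p (m + 2 - 2) (k - 1) = 0 := ih m (by omega) (k - 1) (by omega) (by omega)
      simp only [show m + 2 - 1 = m + 1 from rfl, show m + 2 - 2 = m from rfl] at *
      rw [z1, z2]

lemma p_formula (n : ℕ) : ∀ k, 1 ≤ k → 2 * k - 1 ≤ n →
    p n k = 2 ^ k * Nat.choose (n - k + 1) k := by
  induction n using Nat.strong_induction_on with
  | _ n ih =>
    intro k hk hn
    match n, hn with
    | 0, hn => omega
    | 1, hn =>
      have : k = 1 := by omega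
      subst this
      simpa using p_one_one
    | (m + 2), hn =>
      have hrec := p_rec (m + 2) k (by omega) hk
      simp only [show m + 2 - 1 = m + 1 from rfl, show m + 2 - 2 = m from rfl] at hrec
      rcases Nat.lt_or_ge (m + 1) (2 * k - 1) with hcase | hcase
      · -- n = 2k-1 exactly
        have hkm : m + 2 = 2 * k - 1 := by omega
        have z1 : p (m + 1) k = 0 := p_eq_zero (m + 1) k hk (by omega)
        have hk2 : 2 ≤ k := by omega
        have z2 : p m (k - 1) = 2 ^ (k - 1) * Nat.choose (m - (k - 1) + 1) (k - 1) :=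
          ih m (by omega) (k - 1) (by omega) (by omega)
        have hm : m - (k - 1) + 1 = k - 1 := by omega
        rw [hrec, z1, z2, hm, Nat.choose_self]
        have h2 : m + 2 - k + 1 = k := by omega
        rw [h2, Nat.choose_self]
        have : 2 * (2 ^ (k - 1) * 1) = 2 ^ k := by
          rw [mul_one, ← pow_succ']
          congr 1
          omega
        omega
      · -- n-1 ≥ 2k-1
        have z1 : p (m + 1) k = 2 ^ k * Nat.choose (m + 1 - k + 1) k :=
          ih (m + 1) (by omega) k hk hcase
        rcases Nat.eq_or_lt_of_le hk with hk1 | hk2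
        · -- k = 1
          subst hk1
          have z0 : p m 0 = 1 := p_zero_right m
          have a1 : m + 1 - 1 + 1 = m + 1 := by omega
          have a2 : m + 2 - 1 + 1 = m + 2 := by omega
          rw [hrec, z1, z0, a1, a2, Nat.choose_one_right, Nat.choose_one_right]
          ring_nf
        · have hk2' : 2 ≤ k := hk2
          have z2 : p m (k - 1) = 2 ^ (k - 1) * Nat.choose (m - (k - 1) + 1) (k - 1) :=
            ih m (by omega) (k - 1) (by omega) (by omega)
          rw [hrec, z1, z2]
          have hkm : k ≤ m + 1 := by omega
          have ha : m + 1 - k + 1 = m + 2 - k := by omega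
          have hb : m - (k - 1) + 1 = m + 2 - k := by omega
          rw [ha, hb]
          -- choose (m+2-k+1) k? no: goal 2^k * C(m+2-k, k) + 2*(2^(k-1)*C(m+2-k, k-1)) = 2^k * C(m+2-k+1, k)
          have hc : m + 2 - k + 1 = (m + 2 - k) + 1 := rfl
          have hpas : Nat.choose (m + 2 - k + 1) k
              = Nat.choose (m + 2 - k) (k - 1) + Nat.choose (m + 2 - k) k := by
            have hk' : k - 1 + 1 = k := by omega
            conv_lhs => rw [← hk']
            rw [Nat.choose_succ_succ, hk']
            simp only [Nat.succ_eq_add_one, hk']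
          rw [hpas]
          have h2p : 2 * 2 ^ (k - 1) = 2 ^ k := by
            rw [← pow_succ']
            congr 1
            omega
          calc 2 ^ k * Nat.choose (m + 2 - k) k
                + 2 * (2 ^ (k - 1) * Nat.choose (m + 2 - k) (k - 1))
              = 2 ^ k * Nat.choose (m + 2 - k) k
                + 2 ^ k * Nat.choose (m + 2 - k) (k - 1) := by rw [← mul_assoc, h2p]
            _ = 2 ^ k * (Nat.choose (m + 2 - k) (k - 1) + Nat.choose (m + 2 - k) k) := by
                ring

/-- For all `k ≥ 1` and `n ≥ 2k - 1`, `p n k = 2^k * C(n - k + 1, k)`. -/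
theorem kentucky_p_closed_form (k n : ℕ) (hk : 1 ≤ k) (hn : 2 * k - 1 ≤ n) :
    p n k = 2 ^ k * Nat.choose (n - k + 1) k := by
  exact p_formula n k hk hn
end
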